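/- For every function Q : Δ(S) × A → ℝ and every a ∈ A, the map b ↦ H_OTIB Q(b,a) is convex on Δ(S): for all beliefs b₁, b₂ and λ ∈ [0,1], H_OTIB Q(λb₁+(1−λ)b₂, a) ≤ λ·H_OTIB Q(b₁,a) + (1−λ)·H_OTIB Q(b₂,a). Consequently, any fixed point Q of H_OTIB (Q = H_OTIB Q) is convex in the belief. -/

import Mathlib

open Finset
open scoped Classical

set_option linter.unusedSectionVars false

/-- A belief (probability distribution) over a finite state space `S`. -/
structure Belief (S : Type*) [Fintype S] where
  val : S → ℝ
  nonneg : ∀ s, 0 ≤ val s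
  sum_one : ∑ s, val s = 1

/-- The convex combination `l • b₁ + (1-l) • b₂` of two beliefs. -/
noncomputable def Belief.mix {S : Type*} [Fintype S] (b₁ b₂ : Belief S) (l : ℝ)
    (h0 : 0 ≤ l) (h1 : l ≤ 1) : Belief S where
  val s := l * b₁.val s + (1 - l) * b₂.val s
  nonneg s := add_nonneg (mul_nonneg h0 (b₁.nonneg s))
    (mul_nonneg (by linarith) (b₂.nonneg s))
  sum_one := by
    rw [Finset.sum_add_distrib, ← Finset.mul_sum, ← Finset.mul_sum, b₁.sum_one, b₂.sum_one]
    ring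

/-- `Q : Δ(S) × A → ℝ` is convex in the belief. -/
def ConvexInBelief {S A : Type*} [Fintype S] (Q : Belief S → A → ℝ) : Prop :=
  ∀ (a : A) (b₁ b₂ : Belief S) (l : ℝ) (h0 : 0 ≤ l) (h1 : l ≤ 1),
    Q (Belief.mix b₁ b₂ l h0 h1) a ≤ l * Q b₁ a + (1 - l) * Q b₂ a

/-- A finite POMDP: transition function `T s a s' = T(s'|s,a)`, observation function
`Z a s' o = Ω(o|a,s')`, rewards `R`, discount `γ ∈ (0,1)`. -/
structure POMDP (S A O : Type*) [Fintype S] [Fintype A] [Fintype O] where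
  T : S → A → S → ℝ
  T_nonneg : ∀ s a s', 0 ≤ T s a s'
  T_sum_one : ∀ s a, ∑ s', T s a s' = 1
  Z : A → S → O → ℝ
  Z_nonneg : ∀ a s' o, 0 ≤ Z a s' o
  Z_sum_one : ∀ a s', ∑ o, Z a s' o = 1
  R : S → A → ℝ
  γ : ℝ
  γ_pos : 0 < γ
  γ_lt_one : γ < 1

namespace POMDP

variable {S A O : Type*} [Fintype S] [Fintype A] [Fintype O] [Nonempty S] [Nonempty A]
  [Nonempty O]
variable (M : POMDP S A O)

/-- `Pr(s',o|s,a)` -/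
def prSO (s : S) (a : A) (s' : S) (o : O) : ℝ := M.Z a s' o * M.T s a s'

lemma prSO_nonneg (s : S) (a : A) (s' : S) (o : O) : 0 ≤ M.prSO s a s' o :=
  mul_nonneg (M.Z_nonneg a s' o) (M.T_nonneg s a s')

/-- `Pr(o|s,a)` -/
def prO (s : S) (a : A) (o : O) : ℝ := ∑ s', M.prSO s a s' o

/-- `Pr(s',o|b,a)` -/
def bprSO (b : Belief S) (a : A) (s' : S) (o : O) : ℝ := ∑ s, b.val s * M.prSO s a s' o

lemma bprSO_nonneg (b : Belief S) (a : A) (s' : S) (o : O) : 0 ≤ M.bprSO b a s' o :=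
  Finset.sum_nonneg fun s _ => mul_nonneg (b.nonneg s) (M.prSO_nonneg s a s' o)

/-- `Pr(o|b,a)` -/
def bprO (b : Belief S) (a : A) (o : O) : ℝ := ∑ s', M.bprSO b a s' o

/-- The unit belief `δ_s`. -/
noncomputable def unit (s : S) : Belief S where
  val s' := if s' = s then 1 else 0
  nonneg s' := by by_cases h : s' = s <;> simp [h]
  sum_one := by simp

/-- The posterior belief `b_{b,a,o}`, defined when `Pr(o|b,a) > 0`. -/
noncomputable def post (b : Belief S) (a : A) (o : O) (h : 0 < M.bprO b a o) : Belief S where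
  val s' := M.bprSO b a s' o / M.bprO b a o
  nonneg s' := div_nonneg (M.bprSO_nonneg b a s' o) h.le
  sum_one := by
    rw [← Finset.sum_div]
    exact div_self (ne_of_gt h)

/-- The one-step belief `b_{s,a,o} = b_{δ_s,a,o}`, defined when `Pr(o|s,a) > 0`. -/
noncomputable def osb (s : S) (a : A) (o : O) (h : 0 < M.prO s a o) : Belief S where
  val s' := M.prSO s a s' o / M.prO s a o
  nonneg s' := div_nonneg (M.prSO_nonneg s a s' o) h.le
  sum_one := by
    unfold prO
    rw [← Finset.sum_div]
    exact div_self (ne_of_gt h)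

/-- Expected reward `R(b,a)`. -/
noncomputable def expR (b : Belief S) (a : A) : ℝ := ∑ s, b.val s * M.R s a

/-- The fast informed bound operator `H_FIB`. -/
noncomputable def HFIB (Q : Belief S → A → ℝ) (b : Belief S) (a : A) : ℝ :=
  M.expR b a + M.γ * ∑ o, Finset.univ.sup' Finset.univ_nonempty
    (fun a' => ∑ s', M.bprSO b a s' o * Q (unit s') a')

/-- The tighter informed bound operator `H_TIB`. -/
noncomputable def HTIB (Q : Belief S → A → ℝ) (b : Belief S) (a : A) : ℝ :=
  M.expR b a + M.γ * ∑ o, Finset.univ.sup' Finset.univ_nonempty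
    (fun a' => ∑ s, if h : 0 < M.prO s a o then
      b.val s * M.prO s a o * Q (M.osb s a o h) a' else 0)

/-- The optimal Bellman operator `H_POMDP`. -/
noncomputable def HPOMDP (Q : Belief S → A → ℝ) (b : Belief S) (a : A) : ℝ :=
  M.expR b a + M.γ * ∑ o, if h : 0 < M.bprO b a o then
    M.bprO b a o * Finset.univ.sup' Finset.univ_nonempty (fun a' => Q (M.post b a o h) a')
  else 0

/-- Index type for the family `B_SAO`: `none` indexes the initial belief `b₀`,
`some (s,a,o)` (with `Pr(o|s,a) > 0`) indexes the one-step belief `b_{s,a,o}`. -/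
abbrev OSIdx : Type _ := Option {x : S × A × O // 0 < M.prO x.1 x.2.1 x.2.2}

/-- The member of the family `B_SAO` (with initial belief `b₀`) at a given index. -/
noncomputable def member (b₀ : Belief S) : M.OSIdx → Belief S
  | none => b₀
  | some x => M.osb x.1.1 x.1.2.1 x.1.2.2 x.2

/-- `w` is a weight function for the belief `tgt` over the family `B_SAO`. -/
def IsWeight (b₀ : Belief S) (tgt : Belief S) (w : M.OSIdx → ℝ) : Prop :=
  (∀ i, 0 ≤ w i) ∧ ∀ s, ∑ i, w i * (M.member b₀ i).val s = tgt.val s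

/-- The optimized tighter informed bound operator `H_OTIB`. -/
noncomputable def HOTIB (b₀ : Belief S) (Q : Belief S → A → ℝ) (b : Belief S) (a : A) : ℝ :=
  M.expR b a + M.γ * ∑ o, if h : 0 < M.bprO b a o then
    Finset.univ.sup' Finset.univ_nonempty (fun a' =>
      M.bprO b a o * ⨅ w : {w : M.OSIdx → ℝ // M.IsWeight b₀ (M.post b a o h) w},
        ∑ i, (w : M.OSIdx → ℝ) i * Q (M.member b₀ i) a')
  else 0

/-- The operator `H_ŵ` induced by a weight selection `W`. -/
noncomputable def Hsel (b₀ : Belief S)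
    (W : ∀ (b : Belief S) (a : A) (o : O), 0 < M.bprO b a o → (M.OSIdx → ℝ))
    (Q : Belief S → A → ℝ) (b : Belief S) (a : A) : ℝ :=
  M.expR b a + M.γ * ∑ o, if h : 0 < M.bprO b a o then
    Finset.univ.sup' Finset.univ_nonempty (fun a' =>
      M.bprO b a o * ∑ i, W b a o h i * Q (M.member b₀ i) a')
  else 0

end POMDP


namespace POMDP
section Aux

variable {S A O : Type*} [Fintype S] [Fintype A] [Fintype O] [Nonempty S] [Nonempty A]
  [Nonempty O] (M : POMDP S A O)

lemma prO_nonneg' (s : S) (a : A) (o : O) : 0 ≤ M.prO s a o :=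
  Finset.sum_nonneg fun _ _ => M.prSO_nonneg _ _ _ _

lemma bprO_nonneg' (b : Belief S) (a : A) (o : O) : 0 ≤ M.bprO b a o :=
  Finset.sum_nonneg fun _ _ => M.bprSO_nonneg _ _ _ _

lemma prSO_eq_zero' {s : S} {a : A} {o : O} (h : M.prO s a o = 0) (s' : S) :
    M.prSO s a s' o = 0 :=
  (Finset.sum_eq_zero_iff_of_nonneg (fun s' _ => M.prSO_nonneg s a s' o)).1 h s'
    (Finset.mem_univ _)

lemma bprSO_eq_zero' {b : Belief S} {a : A} {o : O} (h : M.bprO b a o = 0) (s' : S) :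
    M.bprSO b a s' o = 0 :=
  (Finset.sum_eq_zero_iff_of_nonneg (fun s' _ => M.bprSO_nonneg b a s' o)).1 h s'
    (Finset.mem_univ _)

lemma mix_val (b₁ b₂ : Belief S) (l : ℝ) (h0 : 0 ≤ l) (h1 : l ≤ 1) (s : S) :
    (Belief.mix b₁ b₂ l h0 h1).val s = l * b₁.val s + (1 - l) * b₂.val s := rfl

lemma bprSO_mix (b₁ b₂ : Belief S) (l : ℝ) (h0 : 0 ≤ l) (h1 : l ≤ 1) (a : A) (s' : S) (o : O) :
    M.bprSO (Belief.mix b₁ b₂ l h0 h1) a s' o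
      = l * M.bprSO b₁ a s' o + (1 - l) * M.bprSO b₂ a s' o := by
  unfold POMDP.bprSO
  rw [Finset.mul_sum, Finset.mul_sum, ← Finset.sum_add_distrib]
  refine Finset.sum_congr rfl fun s _ => ?_
  rw [mix_val]; ring

lemma bprO_mix (b₁ b₂ : Belief S) (l : ℝ) (h0 : 0 ≤ l) (h1 : l ≤ 1) (a : A) (o : O) :
    M.bprO (Belief.mix b₁ b₂ l h0 h1) a o
      = l * M.bprO b₁ a o + (1 - l) * M.bprO b₂ a o := by
  unfold POMDP.bprO
  rw [Finset.mul_sum, Finset.mul_sum, ← Finset.sum_add_distrib]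
  exact Finset.sum_congr rfl fun s' _ => M.bprSO_mix b₁ b₂ l h0 h1 a s' o

lemma expR_mix (b₁ b₂ : Belief S) (l : ℝ) (h0 : 0 ≤ l) (h1 : l ≤ 1) (a : A) :
    M.expR (Belief.mix b₁ b₂ l h0 h1) a = l * M.expR b₁ a + (1 - l) * M.expR b₂ a := by
  unfold POMDP.expR
  rw [Finset.mul_sum, Finset.mul_sum, ← Finset.sum_add_distrib]
  refine Finset.sum_congr rfl fun s _ => ?_
  rw [mix_val]; ring

lemma weight_sum_one (b₀ tgt : Belief S) (w : M.OSIdx → ℝ)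
    (hw : M.IsWeight b₀ tgt w) : ∑ i, w i = 1 := by
  calc ∑ i, w i = ∑ i, ∑ s, w i * (M.member b₀ i).val s := by
        refine Finset.sum_congr rfl fun i _ => ?_
        rw [← Finset.mul_sum, (M.member b₀ i).sum_one, mul_one]
    _ = ∑ s, ∑ i, w i * (M.member b₀ i).val s := Finset.sum_comm
    _ = ∑ s, tgt.val s := Finset.sum_congr rfl fun s _ => hw.2 s
    _ = 1 := tgt.sum_one

lemma sv_bddBelow (b₀ tgt : Belief S) (Q : Belief S → A → ℝ) (a' : A) :
    BddBelow (Set.range (fun w : {w : M.OSIdx → ℝ // M.IsWeight b₀ tgt w} =>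
      ∑ i, (w : M.OSIdx → ℝ) i * Q (M.member b₀ i) a')) := by
  refine ⟨Finset.univ.inf' Finset.univ_nonempty (fun i => Q (M.member b₀ i) a'), ?_⟩
  rintro x ⟨w, rfl⟩
  calc Finset.univ.inf' Finset.univ_nonempty (fun i => Q (M.member b₀ i) a')
      = (∑ i, (w : M.OSIdx → ℝ) i) *
        Finset.univ.inf' Finset.univ_nonempty (fun i => Q (M.member b₀ i) a') := by
        rw [M.weight_sum_one b₀ tgt _ w.2, one_mul]
    _ = ∑ i, (w : M.OSIdx → ℝ) i *
        Finset.univ.inf' Finset.univ_nonempty (fun i => Q (M.member b₀ i) a') :=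
        Finset.sum_mul _ _ _
    _ ≤ ∑ i, (w : M.OSIdx → ℝ) i * Q (M.member b₀ i) a' :=
        Finset.sum_le_sum fun i _ => mul_le_mul_of_nonneg_left
          (Finset.inf'_le _ (Finset.mem_univ i)) (w.2.1 i)

/-- The canonical weights. -/
noncomputable def canonW (b : Belief S) (a : A) (o : O) : M.OSIdx → ℝ :=
  fun i => match i with
  | none => 0
  | some x => if x.1.2.1 = a ∧ x.1.2.2 = o then
      b.val x.1.1 * M.prO x.1.1 a o / M.bprO b a o else 0

lemma canonW_isWeight (b₀ b : Belief S) (a : A) (o : O) (h : 0 < M.bprO b a o) :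
    M.IsWeight b₀ (M.post b a o h) (M.canonW b a o) := by
  constructor
  · intro i
    match i with
    | none => exact le_refl 0
    | some x =>
      show (0:ℝ) ≤ if x.1.2.1 = a ∧ x.1.2.2 = o then
        b.val x.1.1 * M.prO x.1.1 a o / M.bprO b a o else 0
      split
      · exact div_nonneg (mul_nonneg (b.nonneg _) (M.prO_nonneg' _ _ _)) h.le
      · exact le_refl 0
  · intro s'
    rw [Fintype.sum_option]
    have hnone : M.canonW b a o none * (M.member b₀ none).val s' = 0 := by
      show (0:ℝ) * _ = 0; ring
    set g : S × A × O → ℝ := fun x => if x.2.1 = a ∧ x.2.2 = o then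
      b.val x.1 * M.prSO x.1 a s' o / M.bprO b a o else 0 with hg
    have step1 : ∀ x : {x : S × A × O // 0 < M.prO x.1 x.2.1 x.2.2},
        M.canonW b a o (some x) * (M.member b₀ (some x)).val s' = g x.1 := by
      rintro ⟨⟨s₁, a₁, o₁⟩, hx⟩
      show (if a₁ = a ∧ o₁ = o then b.val s₁ * M.prO s₁ a o / M.bprO b a o else 0) *
        (M.prSO s₁ a₁ s' o₁ / M.prO s₁ a₁ o₁) =
        if a₁ = a ∧ o₁ = o then b.val s₁ * M.prSO s₁ a s' o / M.bprO b a o else 0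
      by_cases hc : a₁ = a ∧ o₁ = o
      · obtain ⟨rfl, rfl⟩ := hc
        rw [if_pos ⟨rfl, rfl⟩, if_pos ⟨rfl, rfl⟩]
        have hP : M.prO s₁ a₁ o₁ ≠ 0 := ne_of_gt hx
        have hB : M.bprO b a₁ o₁ ≠ 0 := ne_of_gt h
        field_simp
      · rw [if_neg hc, if_neg hc, zero_mul]
    have step2 : ∑ x : {x : S × A × O // 0 < M.prO x.1 x.2.1 x.2.2}, g x.1
        = ∑ x ∈ Finset.univ.filter (fun x : S × A × O => 0 < M.prO x.1 x.2.1 x.2.2), g x :=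
      (Finset.sum_subtype _ (by simp) g).symm
    have step3 : ∑ x ∈ Finset.univ.filter
        (fun x : S × A × O => 0 < M.prO x.1 x.2.1 x.2.2), g x = ∑ x, g x := by
      refine Finset.sum_filter_of_ne fun x _ hne => ?_
      by_cases hc : x.2.1 = a ∧ x.2.2 = o
      · obtain ⟨h1, h2⟩ := hc
        rw [h1, h2]
        rcases (M.prO_nonneg' x.1 a o).lt_or_eq with hlt | heq
        · exact hlt
        · exfalso
          apply hne
          rw [hg]
          simp only
          rw [if_pos ⟨h1, h2⟩, M.prSO_eq_zero' heq.symm s', mul_zero, zero_div]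
      · exfalso; apply hne; rw [hg]; simp only; rw [if_neg hc]
    have step4 : ∑ x : S × A × O, g x = ∑ s₁, b.val s₁ * M.prSO s₁ a s' o / M.bprO b a o := by
      rw [Fintype.sum_prod_type]
      refine Finset.sum_congr rfl fun s₁ _ => ?_
      rw [Fintype.sum_prod_type]
      simp [hg, ite_and, Finset.sum_ite_eq']
    have step5 : ∑ s₁, b.val s₁ * M.prSO s₁ a s' o / M.bprO b a o
        = (M.post b a o h).val s' := by
      rw [← Finset.sum_div]
      rfl
    calc M.canonW b a o none * (M.member b₀ none).val s'
          + ∑ x : {x : S × A × O // 0 < M.prO x.1 x.2.1 x.2.2},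
            M.canonW b a o (some x) * (M.member b₀ (some x)).val s'
        = ∑ x : {x : S × A × O // 0 < M.prO x.1 x.2.1 x.2.2}, g x.1 := by
          rw [hnone, zero_add]; exact Finset.sum_congr rfl fun x _ => step1 x
      _ = (M.post b a o h).val s' := by rw [step2, step3, step4, step5]

end Aux
end POMDP


namespace POMDP
section Aux2

variable {S A O : Type*} [Fintype S] [Fintype A] [Fintype O] [Nonempty S] [Nonempty A]
  [Nonempty O] (M : POMDP S A O)

/-- Key lemma: a lower bound for `(coef * Pr(o|b,a)) * (dite-inf term)`. -/
lemma key (b₀ : Belief S) (Q : Belief S → A → ℝ) (a' : A) (b : Belief S) (a : A) (o : O)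
    (coef : ℝ) (hcoef : 0 ≤ coef) (y : ℝ)
    (hy : ∀ w : M.OSIdx → ℝ, (∀ i, 0 ≤ w i) →
      (∀ s, (coef * M.bprO b a o) * ∑ i, w i * (M.member b₀ i).val s
        = coef * M.bprSO b a s o) →
      y ≤ (coef * M.bprO b a o) * ∑ i, w i * Q (M.member b₀ i) a') :
    y ≤ (coef * M.bprO b a o) * (if h : 0 < M.bprO b a o then
      (⨅ w : {w : M.OSIdx → ℝ // M.IsWeight b₀ (M.post b a o h) w},
        ∑ i, (w : M.OSIdx → ℝ) i * Q (M.member b₀ i) a') else 0) := by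
  by_cases h : 0 < M.bprO b a o
  · rw [dif_pos h]
    by_cases hc0 : coef * M.bprO b a o = 0
    · have hcoef0 : coef = 0 := by
        rcases mul_eq_zero.1 hc0 with h' | h'
        · exact h'
        · exact absurd h' (ne_of_gt h)
      rw [hc0, zero_mul]
      have := hy (fun _ => 0) (fun _ => le_refl 0) (fun s => by
        simp [hcoef0])
      simpa [hc0] using this
    · have hcpos : 0 < coef * M.bprO b a o :=
        lt_of_le_of_ne (mul_nonneg hcoef (M.bprO_nonneg' b a o)) (Ne.symm hc0)
      haveI : Nonempty {w : M.OSIdx → ℝ // M.IsWeight b₀ (M.post b a o h) w} :=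
        ⟨⟨M.canonW b a o, M.canonW_isWeight b₀ b a o h⟩⟩
      rw [mul_comm]
      rw [← div_le_iff₀ hcpos]
      refine le_ciInf fun w => ?_
      rw [div_le_iff₀ hcpos, mul_comm]
      refine hy w.1 w.2.1 fun s => ?_
      rw [w.2.2 s]
      show coef * M.bprO b a o * (M.bprSO b a s o / M.bprO b a o) = _
      field_simp
  · have hp0 : M.bprO b a o = 0 := le_antisymm (not_lt.1 h) (M.bprO_nonneg' b a o)
    rw [dif_neg h, mul_zero]
    have := hy (fun _ => 0) (fun _ => le_refl 0) (fun s => by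
      simp [M.bprSO_eq_zero' hp0 s])
    simpa using this

/-- Core mixing lemma. -/
lemma core (b₀ : Belief S) (Q : Belief S → A → ℝ) (a' : A) (b₁ b₂ : Belief S) (l : ℝ)
    (h0 : 0 ≤ l) (h1 : l ≤ 1) (a : A) (o : O)
    (hm : 0 < M.bprO (Belief.mix b₁ b₂ l h0 h1) a o)
    (w₁ w₂ : M.OSIdx → ℝ) (hw₁n : ∀ i, 0 ≤ w₁ i) (hw₂n : ∀ i, 0 ≤ w₂ i)
    (hw₁ : ∀ s, (l * M.bprO b₁ a o) * ∑ i, w₁ i * (M.member b₀ i).val s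
      = l * M.bprSO b₁ a s o)
    (hw₂ : ∀ s, ((1 - l) * M.bprO b₂ a o) * ∑ i, w₂ i * (M.member b₀ i).val s
      = (1 - l) * M.bprSO b₂ a s o) :
    M.bprO (Belief.mix b₁ b₂ l h0 h1) a o *
      (⨅ w : {w : M.OSIdx → ℝ //
          M.IsWeight b₀ (M.post (Belief.mix b₁ b₂ l h0 h1) a o hm) w},
        ∑ i, (w : M.OSIdx → ℝ) i * Q (M.member b₀ i) a')
    ≤ (l * M.bprO b₁ a o) * ∑ i, w₁ i * Q (M.member b₀ i) a'
      + ((1 - l) * M.bprO b₂ a o) * ∑ i, w₂ i * Q (M.member b₀ i) a' := by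
  set p := M.bprO (Belief.mix b₁ b₂ l h0 h1) a o with hp
  set c₁ := l * M.bprO b₁ a o with hc₁
  set c₂ := (1 - l) * M.bprO b₂ a o with hc₂
  have hc₁n : 0 ≤ c₁ := mul_nonneg h0 (M.bprO_nonneg' b₁ a o)
  have hc₂n : 0 ≤ c₂ := mul_nonneg (by linarith) (M.bprO_nonneg' b₂ a o)
  have hpne : p ≠ 0 := ne_of_gt hm
  set w : M.OSIdx → ℝ := fun i => (c₁ * w₁ i + c₂ * w₂ i) / p with hwdef
  have hW : M.IsWeight b₀ (M.post (Belief.mix b₁ b₂ l h0 h1) a o hm) w := by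
    constructor
    · intro i
      exact div_nonneg (add_nonneg (mul_nonneg hc₁n (hw₁n i)) (mul_nonneg hc₂n (hw₂n i))) hm.le
    · intro s
      have expand : ∑ i, w i * (M.member b₀ i).val s
          = (c₁ * ∑ i, w₁ i * (M.member b₀ i).val s
            + c₂ * ∑ i, w₂ i * (M.member b₀ i).val s) / p := by
        rw [Finset.mul_sum, Finset.mul_sum, ← Finset.sum_add_distrib, Finset.sum_div]
        refine Finset.sum_congr rfl fun i _ => ?_
        simp only [hwdef]
        ring
      rw [expand, hw₁ s, hw₂ s]
      show _ = M.bprSO (Belief.mix b₁ b₂ l h0 h1) a s o / p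
      rw [M.bprSO_mix b₁ b₂ l h0 h1 a s o]
  have step : p * (⨅ w' : {w' : M.OSIdx → ℝ //
        M.IsWeight b₀ (M.post (Belief.mix b₁ b₂ l h0 h1) a o hm) w'},
      ∑ i, (w' : M.OSIdx → ℝ) i * Q (M.member b₀ i) a')
      ≤ p * ∑ i, w i * Q (M.member b₀ i) a' :=
    mul_le_mul_of_nonneg_left
      (ciInf_le (M.sv_bddBelow b₀ _ Q a') ⟨w, hW⟩) hm.le
  refine step.trans (le_of_eq ?_)
  rw [Finset.mul_sum, Finset.mul_sum, Finset.mul_sum, ← Finset.sum_add_distrib]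
  refine Finset.sum_congr rfl fun i _ => ?_
  rw [hwdef]
  field_simp

/-- Per-observation convexity. -/
lemma per_o (b₀ : Belief S) (Q : Belief S → A → ℝ) (b₁ b₂ : Belief S) (l : ℝ)
    (h0 : 0 ≤ l) (h1 : l ≤ 1) (a : A) (o : O) :
    (if h : 0 < M.bprO (Belief.mix b₁ b₂ l h0 h1) a o then
      Finset.univ.sup' Finset.univ_nonempty (fun a' =>
        M.bprO (Belief.mix b₁ b₂ l h0 h1) a o *
          ⨅ w : {w : M.OSIdx → ℝ //
            M.IsWeight b₀ (M.post (Belief.mix b₁ b₂ l h0 h1) a o h) w},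
          ∑ i, (w : M.OSIdx → ℝ) i * Q (M.member b₀ i) a')
    else 0)
    ≤ l * (if h : 0 < M.bprO b₁ a o then
        Finset.univ.sup' Finset.univ_nonempty (fun a' =>
          M.bprO b₁ a o * ⨅ w : {w : M.OSIdx → ℝ // M.IsWeight b₀ (M.post b₁ a o h) w},
            ∑ i, (w : M.OSIdx → ℝ) i * Q (M.member b₀ i) a')
      else 0)
      + (1 - l) * (if h : 0 < M.bprO b₂ a o then
        Finset.univ.sup' Finset.univ_nonempty (fun a' =>
          M.bprO b₂ a o * ⨅ w : {w : M.OSIdx → ℝ // M.IsWeight b₀ (M.post b₂ a o h) w},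
            ∑ i, (w : M.OSIdx → ℝ) i * Q (M.member b₀ i) a')
      else 0) := by
  by_cases hm : 0 < M.bprO (Belief.mix b₁ b₂ l h0 h1) a o
  · rw [dif_pos hm]
    refine Finset.sup'_le _ _ fun a' _ => ?_
    set D₁ := (if h : 0 < M.bprO b₁ a o then
        (⨅ w : {w : M.OSIdx → ℝ // M.IsWeight b₀ (M.post b₁ a o h) w},
          ∑ i, (w : M.OSIdx → ℝ) i * Q (M.member b₀ i) a') else 0) with hD₁
    set D₂ := (if h : 0 < M.bprO b₂ a o then
        (⨅ w : {w : M.OSIdx → ℝ // M.IsWeight b₀ (M.post b₂ a o h) w},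
          ∑ i, (w : M.OSIdx → ℝ) i * Q (M.member b₀ i) a') else 0) with hD₂
    have hU₁ : (l * M.bprO b₁ a o) * D₁ ≤ l * (if h : 0 < M.bprO b₁ a o then
        Finset.univ.sup' Finset.univ_nonempty (fun a'' =>
          M.bprO b₁ a o * ⨅ w : {w : M.OSIdx → ℝ // M.IsWeight b₀ (M.post b₁ a o h) w},
            ∑ i, (w : M.OSIdx → ℝ) i * Q (M.member b₀ i) a'')
      else 0) := by
      by_cases h : 0 < M.bprO b₁ a o
      · rw [hD₁, dif_pos h, dif_pos h, mul_assoc]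
        exact mul_le_mul_of_nonneg_left (Finset.le_sup'
          (fun a'' => M.bprO b₁ a o *
            ⨅ w : {w : M.OSIdx → ℝ // M.IsWeight b₀ (M.post b₁ a o h) w},
              ∑ i, (w : M.OSIdx → ℝ) i * Q (M.member b₀ i) a'')
          (Finset.mem_univ a')) h0
      · rw [hD₁, dif_neg h, dif_neg h, mul_zero, mul_zero]
    have hU₂ : ((1 - l) * M.bprO b₂ a o) * D₂ ≤ (1 - l) * (if h : 0 < M.bprO b₂ a o then
        Finset.univ.sup' Finset.univ_nonempty (fun a'' =>
          M.bprO b₂ a o * ⨅ w : {w : M.OSIdx → ℝ // M.IsWeight b₀ (M.post b₂ a o h) w},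
            ∑ i, (w : M.OSIdx → ℝ) i * Q (M.member b₀ i) a'')
      else 0) := by
      by_cases h : 0 < M.bprO b₂ a o
      · rw [hD₂, dif_pos h, dif_pos h, mul_assoc]
        exact mul_le_mul_of_nonneg_left (Finset.le_sup'
          (fun a'' => M.bprO b₂ a o *
            ⨅ w : {w : M.OSIdx → ℝ // M.IsWeight b₀ (M.post b₂ a o h) w},
              ∑ i, (w : M.OSIdx → ℝ) i * Q (M.member b₀ i) a'')
          (Finset.mem_univ a')) (by linarith)
      · rw [hD₂, dif_neg h, dif_neg h, mul_zero, mul_zero]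
    have main : M.bprO (Belief.mix b₁ b₂ l h0 h1) a o *
        (⨅ w : {w : M.OSIdx → ℝ //
            M.IsWeight b₀ (M.post (Belief.mix b₁ b₂ l h0 h1) a o hm) w},
          ∑ i, (w : M.OSIdx → ℝ) i * Q (M.member b₀ i) a')
        ≤ (l * M.bprO b₁ a o) * D₁ + ((1 - l) * M.bprO b₂ a o) * D₂ := by
      rw [← sub_le_iff_le_add]
      rw [hD₁]
      refine M.key b₀ Q a' b₁ a o l h0 _ fun w₁ hw₁n hw₁ => ?_
      rw [sub_le_iff_le_add, ← sub_le_iff_le_add']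
      rw [hD₂]
      refine M.key b₀ Q a' b₂ a o (1 - l) (by linarith) _ fun w₂ hw₂n hw₂ => ?_
      rw [sub_le_iff_le_add']
      exact M.core b₀ Q a' b₁ b₂ l h0 h1 a o hm w₁ w₂ hw₁n hw₂n hw₁ hw₂
    exact main.trans (add_le_add hU₁ hU₂)
  · rw [dif_neg hm]
    have hp0 : M.bprO (Belief.mix b₁ b₂ l h0 h1) a o = 0 :=
      le_antisymm (not_lt.1 hm) (M.bprO_nonneg' _ a o)
    rw [M.bprO_mix b₁ b₂ l h0 h1 a o] at hp0
    have hc₁n : 0 ≤ l * M.bprO b₁ a o := mul_nonneg h0 (M.bprO_nonneg' b₁ a o)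
    have hc₂n : 0 ≤ (1 - l) * M.bprO b₂ a o :=
      mul_nonneg (by linarith) (M.bprO_nonneg' b₂ a o)
    have hc₁ : l * M.bprO b₁ a o = 0 := by linarith
    have hc₂ : (1 - l) * M.bprO b₂ a o = 0 := by linarith
    have e₁ : l * (if h : 0 < M.bprO b₁ a o then
        Finset.univ.sup' Finset.univ_nonempty (fun a'' =>
          M.bprO b₁ a o * ⨅ w : {w : M.OSIdx → ℝ // M.IsWeight b₀ (M.post b₁ a o h) w},
            ∑ i, (w : M.OSIdx → ℝ) i * Q (M.member b₀ i) a'')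
      else 0) = 0 := by
      by_cases hl : l = 0
      · rw [hl, zero_mul]
      · have : M.bprO b₁ a o = 0 := by
          rcases mul_eq_zero.1 hc₁ with h' | h'
          · exact absurd h' hl
          · exact h'
        rw [dif_neg (by rw [this]; exact lt_irrefl 0), mul_zero]
    have e₂ : (1 - l) * (if h : 0 < M.bprO b₂ a o then
        Finset.univ.sup' Finset.univ_nonempty (fun a'' =>
          M.bprO b₂ a o * ⨅ w : {w : M.OSIdx → ℝ // M.IsWeight b₀ (M.post b₂ a o h) w},
            ∑ i, (w : M.OSIdx → ℝ) i * Q (M.member b₀ i) a'')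
      else 0) = 0 := by
      by_cases hl : (1 - l) = 0
      · rw [hl, zero_mul]
      · have : M.bprO b₂ a o = 0 := by
          rcases mul_eq_zero.1 hc₂ with h' | h'
          · exact absurd h' hl
          · exact h'
        rw [dif_neg (by rw [this]; exact lt_irrefl 0), mul_zero]
    rw [e₁, e₂, add_zero]

end Aux2
end POMDP

/-- For any `Q`, `H_OTIB Q` is convex in the belief; consequently any fixed point of
`H_OTIB` is convex in the belief. -/
theorem HOTIB_convex {S A O : Type*} [Fintype S] [Fintype A] [Fintype O]
    [Nonempty S] [Nonempty A] [Nonempty O] (M : POMDP S A O) (b₀ : Belief S) :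
    (∀ Q : Belief S → A → ℝ, ConvexInBelief (fun b a => M.HOTIB b₀ Q b a)) ∧
    (∀ Q : Belief S → A → ℝ, (∀ b a, Q b a = M.HOTIB b₀ Q b a) → ConvexInBelief Q) := by
  have aux : ∀ Q : Belief S → A → ℝ, ConvexInBelief (fun b a => M.HOTIB b₀ Q b a) := by
    intro Q a b₁ b₂ l h0 h1
    show M.HOTIB b₀ Q (Belief.mix b₁ b₂ l h0 h1) a
      ≤ l * M.HOTIB b₀ Q b₁ a + (1 - l) * M.HOTIB b₀ Q b₂ a
    unfold POMDP.HOTIB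
    set T : Belief S → O → ℝ := fun b o => if h : 0 < M.bprO b a o then
      Finset.univ.sup' Finset.univ_nonempty (fun a' =>
        M.bprO b a o * ⨅ w : {w : M.OSIdx → ℝ // M.IsWeight b₀ (M.post b a o h) w},
          ∑ i, (w : M.OSIdx → ℝ) i * Q (M.member b₀ i) a')
      else 0 with hT
    have hsum : ∑ o, T (Belief.mix b₁ b₂ l h0 h1) o
        ≤ l * (∑ o, T b₁ o) + (1 - l) * (∑ o, T b₂ o) := by
      calc ∑ o, T (Belief.mix b₁ b₂ l h0 h1) o
          ≤ ∑ o, (l * T b₁ o + (1 - l) * T b₂ o) :=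
            Finset.sum_le_sum fun o _ => M.per_o b₀ Q b₁ b₂ l h0 h1 a o
        _ = l * (∑ o, T b₁ o) + (1 - l) * (∑ o, T b₂ o) := by
            rw [Finset.sum_add_distrib, ← Finset.mul_sum, ← Finset.mul_sum]
    have hγ : M.γ * ∑ o, T (Belief.mix b₁ b₂ l h0 h1) o
        ≤ M.γ * (l * (∑ o, T b₁ o) + (1 - l) * (∑ o, T b₂ o)) :=
      mul_le_mul_of_nonneg_left hsum M.γ_pos.le
    have hR := M.expR_mix b₁ b₂ l h0 h1 a
    have hid : l * (M.expR b₁ a + M.γ * ∑ o, T b₁ o)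
        + (1 - l) * (M.expR b₂ a + M.γ * ∑ o, T b₂ o)
        = (l * M.expR b₁ a + (1 - l) * M.expR b₂ a)
          + M.γ * (l * (∑ o, T b₁ o) + (1 - l) * (∑ o, T b₂ o)) := by ring
    rw [hid, hR]
    linarith
  refine ⟨aux, fun Q hQ a b₁ b₂ l h0 h1 => ?_⟩
  rw [hQ (Belief.mix b₁ b₂ l h0 h1) a, hQ b₁ a, hQ b₂ a]
  exact aux Q a b₁ b₂ l h0 h1
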